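/- Let α ≤ β ≤ γ be compositions of n. In the Iwahori subgroup Iₙ ⊆ GLₙ(O), one has U_α^γ = U_α^β ⋉ U_β^γ: that is, U_β^γ is a normal subgroup of U_α^γ, U_α^β is a subgroup of U_α^γ, their intersection is trivial, and U_α^γ = U_α^β · U_β^γ. -/

import Mathlib

section Iwahori

variable {O : Type} [CommRing O] [IsDomain O] [IsDiscreteValuationRing O] {n : ℕ}

/-- Membership in `U_γ`: `g` is upper-triangular with unipotent diagonal and
`g i j = 0` for `i ≠ j` in the same block of `γ`. -/
def InUpper (γ : Composition n) (g : Matrix (Fin n) (Fin n) O) : Prop :=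
  (∀ i j : Fin n, j < i → g i j = 0) ∧ (∀ i : Fin n, g i i = 1) ∧
  (∀ i j : Fin n, i ≠ j → γ.index i = γ.index j → g i j = 0)

/-- Membership in `U_α^β = U_α ∩ I_β` (for `α ≤ β`): additionally `g i j = 0`
unless `i` and `j` lie in the same block of `β`. -/
def InUpperSub (α β : Composition n) (g : Matrix (Fin n) (Fin n) O) : Prop :=
  InUpper α g ∧ ∀ i j : Fin n, β.index i ≠ β.index j → g i j = 0

end Iwahori


section Aux
variable {O : Type} [CommRing O] {n : ℕ}

theorem index_mono' (c : Composition n) {i j : Fin n} (h : i ≤ j) :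
    c.index i ≤ c.index j := by
  by_contra hlt
  push_neg at hlt
  have h1 : c.sizeUpTo ((c.index j : ℕ) + 1) ≤ c.sizeUpTo (c.index i) :=
    c.monotone_sizeUpTo (by exact_mod_cast hlt)
  have h2 : (j : ℕ) < c.sizeUpTo ((c.index j : ℕ) + 1) := by
    simpa [Fin.val_succ] using c.lt_sizeUpTo_index_succ j
  have h3 := c.sizeUpTo_index_le i
  have : (i : ℕ) ≤ j := h
  omega

theorem index_between (c : Composition n) {i k j : Fin n} (hik : i ≤ k) (hkj : k ≤ j)
    (h : c.index i = c.index j) : c.index i = c.index k :=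
  le_antisymm (index_mono' c hik) (h ▸ index_mono' c hkj)

def Tri (c : Composition n) (g : Matrix (Fin n) (Fin n) O) : Prop :=
  (∀ i j : Fin n, j < i → g i j = 0) ∧ (∀ i : Fin n, g i i = 1) ∧
  (∀ i j : Fin n, c.index i ≠ c.index j → g i j = 0)

theorem Tri.ne_zero {c : Composition n} {g : Matrix (Fin n) (Fin n) O} (hg : Tri c g)
    {i j : Fin n} (h : g i j ≠ 0) : i ≤ j ∧ c.index i = c.index j := by
  constructor
  · by_contra hij; exact h (hg.1 i j (not_le.1 hij))
  · by_contra hc; exact h (hg.2.2 i j hc)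

theorem tri_one (c : Composition n) : Tri c (1 : Matrix (Fin n) (Fin n) O) :=
  ⟨fun i j h => Matrix.one_apply_ne (fun e => absurd e.symm (ne_of_lt h)),
   fun i => Matrix.one_apply_eq i,
   fun i j h => Matrix.one_apply_ne (fun e => h (e ▸ rfl))⟩

theorem Tri.mul {c : Composition n} {g h : Matrix (Fin n) (Fin n) O}
    (hg : Tri c g) (hh : Tri c h) : Tri c (g * h) := by
  refine ⟨fun i j hji => ?_, fun i => ?_, fun i j hc => ?_⟩
  · rw [Matrix.mul_apply]
    refine Finset.sum_eq_zero fun k _ => ?_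
    by_contra hne
    have h1 := hg.ne_zero (left_ne_zero_of_mul hne)
    have h2 := hh.ne_zero (right_ne_zero_of_mul hne)
    exact absurd ((h1.1.trans h2.1)) (not_le.2 hji)
  · rw [Matrix.mul_apply]
    rw [Finset.sum_eq_single i]
    · rw [hg.2.1, hh.2.1, one_mul]
    · intro k _ hk
      by_contra hne
      have h1 := hg.ne_zero (left_ne_zero_of_mul hne)
      have h2 := hh.ne_zero (right_ne_zero_of_mul hne)
      exact hk (le_antisymm h2.1 h1.1)
    · intro habs; exact absurd (Finset.mem_univ i) habs
  · rw [Matrix.mul_apply]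
    refine Finset.sum_eq_zero fun k _ => ?_
    by_contra hne
    have h1 := hg.ne_zero (left_ne_zero_of_mul hne)
    have h2 := hh.ne_zero (right_ne_zero_of_mul hne)
    exact hc (h1.2.trans h2.2)


/-- support behavior of powers of a strictly upper triangular, block-supported matrix -/
theorem pow_entry {c : Composition n} {N : Matrix (Fin n) (Fin n) O}
    (hN : ∀ i j : Fin n, N i j ≠ 0 → i < j ∧ c.index i = c.index j) :
    ∀ k, ∀ i j : Fin n, (N ^ k) i j ≠ 0 →
      i ≤ j ∧ c.index i = c.index j ∧ ((i : ℕ) + k ≤ (j : ℕ) ∨ (k = 0 ∧ i = j)) := by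
  intro k
  induction k with
  | zero =>
    intro i j h
    rw [pow_zero] at h
    have : i = j := by by_contra hne; exact h (Matrix.one_apply_ne hne)
    subst this
    exact ⟨le_refl _, rfl, Or.inr ⟨rfl, rfl⟩⟩
  | succ k ih =>
    intro i j h
    rw [pow_succ, Matrix.mul_apply] at h
    obtain ⟨m, _, hm⟩ := Finset.exists_ne_zero_of_sum_ne_zero h
    have h1 := ih i m (left_ne_zero_of_mul hm)
    have h2 := hN m j (right_ne_zero_of_mul hm)
    have hij : (i : ℕ) + (k + 1) ≤ j := by
      have hmj : (m : ℕ) < j := h2.1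
      rcases h1.2.2 with hk | ⟨hk0, he⟩
      · omega
      · have : (i : ℕ) = m := by rw [he]
        omega
    exact ⟨le_of_lt (lt_of_le_of_lt h1.1 h2.1), h1.2.1.trans h2.2, Or.inl hij⟩

theorem tri_inv {c : Composition n} {g : Matrix (Fin n) (Fin n) O} (hg : Tri c g) :
    ∃ g' : Matrix (Fin n) (Fin n) O, Tri c g' ∧ g * g' = 1 ∧ g' * g = 1 := by
  set N : Matrix (Fin n) (Fin n) O := 1 - g with hNdef
  have hN : ∀ i j : Fin n, N i j ≠ 0 → i < j ∧ c.index i = c.index j := by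
    intro i j h
    have hne : i ≠ j := by
      rintro rfl
      apply h
      simp [hNdef, Matrix.sub_apply, Matrix.one_apply_eq, hg.2.1]
    have hgne : g i j ≠ 0 ∨ (1 : Matrix (Fin n) (Fin n) O) i j ≠ 0 := by
      by_contra hc
      push_neg at hc
      exact h (by simp [hNdef, Matrix.sub_apply, hc.1, hc.2])
    rcases hgne with hgne | hone
    · have := hg.ne_zero hgne
      exact ⟨lt_of_le_of_ne this.1 hne, this.2⟩
    · exact absurd (Matrix.one_apply_ne hne) hone
  have hNn : N ^ n = 0 := by
    ext i j
    by_contra hne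
    have := pow_entry hN n i j hne
    have hj := j.2
    have hi := i.2
    rcases this.2.2 with hk | ⟨hk, _⟩
    · omega
    · omega
  refine ⟨∑ k ∈ Finset.range n, N ^ k, ⟨?_, ?_, ?_⟩, ?_, ?_⟩
  · intro i j hji
    rw [Matrix.sum_apply]
    refine Finset.sum_eq_zero fun k _ => ?_
    by_contra hne
    exact absurd (pow_entry hN k i j hne).1 (not_le.2 hji)
  · intro i
    rw [Matrix.sum_apply]
    rw [Finset.sum_eq_single_of_mem 0 (Finset.mem_range.2 i.pos)]
    · simp
    · intro k _ hk
      by_contra hne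
      rcases (pow_entry hN k i i hne).2.2 with h | ⟨h, _⟩
      · omega
      · exact hk h
  · intro i j hc
    rw [Matrix.sum_apply]
    refine Finset.sum_eq_zero fun k _ => ?_
    by_contra hne
    exact hc (pow_entry hN k i j hne).2.1
  · have : g = 1 - N := by simp [hNdef]
    rw [this, sub_mul, one_mul, Finset.mul_sum]
    have : ∑ k ∈ Finset.range n, N * N ^ k = ∑ k ∈ Finset.range n, N ^ (k + 1) := by
      refine Finset.sum_congr rfl fun k _ => ?_
      rw [pow_succ']
    rw [this, ← Finset.sum_sub_distrib, Finset.sum_range_sub' (fun k => N ^ k) n, pow_zero, hNn,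
      sub_zero]
  · have : g = 1 - N := by simp [hNdef]
    rw [this, mul_sub, mul_one, Finset.sum_mul]
    have : ∑ k ∈ Finset.range n, N ^ k * N = ∑ k ∈ Finset.range n, N ^ (k + 1) := by
      refine Finset.sum_congr rfl fun k _ => ?_
      rw [pow_succ]
    rw [this, ← Finset.sum_sub_distrib, Finset.sum_range_sub' (fun k => N ^ k) n, pow_zero, hNn,
      sub_zero]


def Pm (β : Composition n) (g : Matrix (Fin n) (Fin n) O) : Matrix (Fin n) (Fin n) O :=
  Matrix.of fun i j => if β.index i = β.index j then g i j else 0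

theorem Pm_one (β : Composition n) : Pm β (1 : Matrix (Fin n) (Fin n) O) = 1 := by
  ext i j
  by_cases h : i = j
  · subst h; simp [Pm]
  · simp only [Pm, Matrix.of_apply, Matrix.one_apply_ne h]
    split_ifs <;> rfl

theorem Pm_mul (β : Composition n) {g h : Matrix (Fin n) (Fin n) O}
    (hg : ∀ i j : Fin n, j < i → g i j = 0) (hh : ∀ i j : Fin n, j < i → h i j = 0) :
    Pm β (g * h) = Pm β g * Pm β h := by
  ext i j
  simp only [Pm, Matrix.of_apply, Matrix.mul_apply]
  by_cases hij : β.index i = β.index j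
  · rw [if_pos hij]
    refine Finset.sum_congr rfl fun m _ => ?_
    by_cases hz : g i m * h m j = 0
    · split_ifs <;> simp [hz]
    · have h1 : g i m ≠ 0 := left_ne_zero_of_mul hz
      have h2 : h m j ≠ 0 := right_ne_zero_of_mul hz
      have him : i ≤ m := by by_contra hc; exact h1 (hg i m (not_le.1 hc))
      have hmj : m ≤ j := by by_contra hc; exact h2 (hh m j (not_le.1 hc))
      have e1 : β.index i = β.index m := index_between β him hmj hij
      have e2 : β.index m = β.index j := e1.symm.trans hij
      rw [if_pos e1, if_pos e2]
  · rw [if_neg hij]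
    symm
    refine Finset.sum_eq_zero fun m _ => ?_
    split_ifs with h1 h2
    · exact absurd (h1.trans h2) hij
    all_goals simp

theorem Pm_eq_one {β : Composition n} {h : Matrix (Fin n) (Fin n) O}
    (hdiag : ∀ i, h i i = 1)
    (hoff : ∀ i j : Fin n, i ≠ j → β.index i = β.index j → h i j = 0) : Pm β h = 1 := by
  ext i j
  simp only [Pm, Matrix.of_apply]
  by_cases hij : i = j
  · subst hij; simp [hdiag]
  · rw [Matrix.one_apply_ne hij]
    split_ifs with h1
    exacts [hoff i j hij h1, rfl]

theorem entry_of_Pm_eq_one {β : Composition n} {k : Matrix (Fin n) (Fin n) O}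
    (h : Pm β k = 1) :
    ∀ i j : Fin n, i ≠ j → β.index i = β.index j → k i j = 0 := by
  intro i j hne hidx
  have := congrFun (congrFun h i) j
  simpa [Pm, hidx, Matrix.one_apply_ne hne] using this

end Aux


/-- **Lemma.** For compositions `α ≤ β ≤ γ` of `n` (refinement order), in the Iwahori
subgroup of `GLₙ(O)` one has `U_α^γ = U_α^β ⋉ U_β^γ`: both `U_α^β` and `U_β^γ` are
contained in `U_α^γ`, `U_β^γ` is stable under conjugation by elements of `U_α^γ`
(normality), the intersection `U_α^β ∩ U_β^γ` is trivial, and `U_α^γ = U_α^β · U_β^γ`. -/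
theorem upper_semidirect_decomposition
    (O : Type) [CommRing O] [IsDomain O] [IsDiscreteValuationRing O] (n : ℕ)
    (α β γ : Composition n)
    (hαβ : ∀ i j : Fin n, α.index i = α.index j → β.index i = β.index j)
    (hβγ : ∀ i j : Fin n, β.index i = β.index j → γ.index i = γ.index j) :
    (∀ g : Matrix (Fin n) (Fin n) O, InUpperSub α β g → InUpperSub α γ g) ∧
    (∀ g : Matrix (Fin n) (Fin n) O, InUpperSub β γ g → InUpperSub α γ g) ∧
    (∀ g h : Matrix (Fin n) (Fin n) O, InUpperSub α γ g → InUpperSub β γ h →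
      InUpperSub β γ (g * h * g⁻¹)) ∧
    (∀ g : Matrix (Fin n) (Fin n) O, InUpperSub α β g → InUpperSub β γ g → g = 1) ∧
    (∀ g : Matrix (Fin n) (Fin n) O, InUpperSub α γ g →
      ∃ u v : Matrix (Fin n) (Fin n) O,
        InUpperSub α β u ∧ InUpperSub β γ v ∧ g = u * v) := by
  have toTriA : ∀ g : Matrix (Fin n) (Fin n) O, InUpperSub α γ g → Tri γ g :=
    fun g h => ⟨h.1.1, h.1.2.1, h.2⟩
  have toTriB : ∀ g : Matrix (Fin n) (Fin n) O, InUpperSub β γ g → Tri γ g :=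
    fun g h => ⟨h.1.1, h.1.2.1, h.2⟩
  refine ⟨?_, ?_, ?_, ?_, ?_⟩
  · rintro g ⟨hg1, hg2⟩
    exact ⟨hg1, fun i j hc => hg2 i j fun hb => hc (hβγ i j hb)⟩
  · rintro g ⟨hg1, hg2⟩
    exact ⟨⟨hg1.1, hg1.2.1, fun i j hne ha => hg1.2.2 i j hne (hαβ i j ha)⟩, hg2⟩
  · intro g h hg hh
    obtain ⟨g', Tg', hgg', hg'g⟩ := tri_inv (toTriA g hg)
    have hinv : g⁻¹ = g' := Matrix.inv_eq_right_inv hgg'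
    rw [hinv]
    have Th := toTriB h hh
    have Tk : Tri γ (g * h * g') := ((toTriA g hg).mul Th).mul Tg'
    have hPh : Pm β h = 1 := Pm_eq_one hh.1.2.1 hh.1.2.2
    have hPk : Pm β (g * h * g') = 1 := by
      rw [Pm_mul β ((toTriA g hg).mul Th).1 Tg'.1, Pm_mul β (toTriA g hg).1 Th.1, hPh,
        mul_one, ← Pm_mul β (toTriA g hg).1 Tg'.1, hgg', Pm_one]
    exact ⟨⟨Tk.1, Tk.2.1, entry_of_Pm_eq_one hPk⟩, Tk.2.2⟩
  · intro g h1 h2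
    ext i j
    by_cases hij : i = j
    · subst hij; rw [h1.1.2.1 i, Matrix.one_apply_eq]
    · rw [Matrix.one_apply_ne hij]
      by_cases hb : β.index i = β.index j
      · exact h2.1.2.2 i j hij hb
      · exact h1.2 i j hb
  · intro g hg
    set u : Matrix (Fin n) (Fin n) O := Pm β g with hu
    have Tg := toTriA g hg
    have Tu : Tri γ u := by
      refine ⟨fun i j hji => ?_, fun i => ?_, fun i j hc => ?_⟩
      · simp only [hu, Pm, Matrix.of_apply]
        split_ifs
        exacts [Tg.1 i j hji, rfl]
      · simp [hu, Pm, Tg.2.1 i]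
      · simp only [hu, Pm, Matrix.of_apply]
        split_ifs
        exacts [Tg.2.2 i j hc, rfl]
    obtain ⟨u', Tu', huu', hu'u⟩ := tri_inv Tu
    refine ⟨u, u' * g, ⟨⟨Tu.1, Tu.2.1, fun i j hne ha => ?_⟩, fun i j hb => ?_⟩, ?_, ?_⟩
    · simp only [hu, Pm, Matrix.of_apply]
      split_ifs
      exacts [hg.1.2.2 i j hne ha, rfl]
    · simp only [hu, Pm, Matrix.of_apply]
      rw [if_neg hb]
    · have Tv : Tri γ (u' * g) := Tu'.mul Tg
      have hPu : Pm β u = u := by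
        ext i j
        rw [hu]
        simp only [Pm, Matrix.of_apply]
        split_ifs <;> rfl
      have hPv : Pm β (u' * g) = 1 := by
        rw [Pm_mul β Tu'.1 Tg.1, ← hu]
        calc Pm β u' * u = Pm β u' * Pm β u := by rw [hPu]
          _ = Pm β (u' * u) := (Pm_mul β Tu'.1 Tu.1).symm
          _ = 1 := by rw [hu'u, Pm_one]
      exact ⟨⟨Tv.1, Tv.2.1, entry_of_Pm_eq_one hPv⟩, Tv.2.2⟩
    · rw [← mul_assoc, huu', one_mul]
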